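/- Let q ≥ 3 be prime and consider the Hecke group G_q. The principal congruence subgroup of level 2, G(2) (kernel of reduction of matrix entries mod 2 in PSL(2, Z[λ_q])), has index 2q in G_q, and G_0(2) = {(x_ij) ∈ G_q : x_{12} ≡ 0 mod 2} has index q in G_q. -/

import Mathlib

open Real

/-- The generator `S = [[0,1],[-1,0]]` as an element of `SL(2,ℝ)`. -/
noncomputable def Smat : Matrix.SpecialLinearGroup (Fin 2) ℝ :=
  ⟨!![0, 1; -1, 0], by norm_num [Matrix.det_fin_two_of]⟩

/-- The generator `T = [[1,λ_q],[0,1]]` as an element of `SL(2,ℝ)`. -/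
noncomputable def Tmat (q : ℕ) : Matrix.SpecialLinearGroup (Fin 2) ℝ :=
  ⟨!![1, 2 * Real.cos (π / q); 0, 1], by norm_num [Matrix.det_fin_two_of]⟩

/-- The Hecke group `G_q` realised inside `SL(2,ℝ)` (it contains `-I = S²`, so indices of
congruence subgroups agree with those in `PSL(2,ℝ)`). -/
noncomputable def HeckeSL (q : ℕ) : Subgroup (Matrix.SpecialLinearGroup (Fin 2) ℝ) :=
  Subgroup.closure {Smat, Tmat q}

/-- The set `2·ℤ[λ_q]` of elements of `ℤ[λ_q] ⊆ ℝ` divisible by 2. -/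
def twoLambda (q : ℕ) : Set ℝ :=
  {y : ℝ | ∃ z ∈ Subring.closure ({2 * Real.cos (π / q)} : Set ℝ), y = 2 * z}

namespace Hecke19

variable (q : ℕ)

noncomputable def lam : ℝ := 2 * Real.cos (π / q)

noncomputable def RR : Subring ℝ := Subring.closure {lam q}

lemma lam_mem : lam q ∈ RR q := Subring.subset_closure rfl

/-! ### Arithmetic: integrality -/

lemma lam_integral (hq : q ≠ 0) : IsIntegral ℤ (lam q) := by
  have key : ∀ z : ℂ, z ^ (2*q) = 1 → IsIntegral ℤ z := by
    intro z hz
    refine ⟨Polynomial.X ^ (2*q) - Polynomial.C 1, Polynomial.monic_X_pow_sub_C 1 (by omega), ?_⟩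
    simp [hz]
  have h2q : ((2*q : ℕ) : ℂ) * ((π/q : ℝ) * Complex.I) = (2*π) * Complex.I := by
    have : (q:ℂ) ≠ 0 := Nat.cast_ne_zero.mpr hq
    push_cast
    field_simp
  have he : IsIntegral ℤ (Complex.exp (((π/q : ℝ)) * Complex.I)) := by
    refine key _ ?_
    rw [← Complex.exp_nat_mul, h2q, Complex.exp_two_pi_mul_I]
  have he' : IsIntegral ℤ (Complex.exp (-(((π/q : ℝ)) * Complex.I))) := by
    refine key _ ?_
    rw [← Complex.exp_nat_mul, mul_neg, h2q]
    simp [Complex.exp_neg, Complex.exp_two_pi_mul_I]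
  have hsum := he.add he'
  have hmap : (algebraMap ℝ ℂ) (lam q)
      = Complex.exp (((π/q : ℝ)) * Complex.I) + Complex.exp (-(((π/q : ℝ)) * Complex.I)) := by
    have : (algebraMap ℝ ℂ) (lam q) = 2 * Complex.cos ((π/q : ℝ) : ℂ) := by
      simp [lam, Complex.ofReal_cos]
    rw [this, Complex.cos]
    ring
  rw [← hmap] at hsum
  exact (isIntegral_algebraMap_iff (algebraMap ℝ ℂ).injective).mp hsum

lemma half_not_integral : ¬ IsIntegral ℤ ((1:ℝ)/2) := by
  intro h
  have : (algebraMap ℚ ℝ) (1/2 : ℚ) = (1:ℝ)/2 := by norm_num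
  rw [← this] at h
  have h2 := (isIntegral_algebraMap_iff (algebraMap ℚ ℝ).injective).mp h
  obtain ⟨y, hy⟩ := IsIntegrallyClosed.isIntegral_iff.mp h2
  have : (y : ℚ) = 1/2 := hy
  have : (2*y : ℚ) = 1 := by rw [this]; ring
  have : (2*y : ℤ) = 1 := by exact_mod_cast this
  omega

lemma mem_RR_integral (hq : q ≠ 0) : ∀ x ∈ RR q, IsIntegral ℤ x := by
  intro x hx
  induction hx using Subring.closure_induction with
  | mem x hx => rw [Set.mem_singleton_iff.mp hx]; exact lam_integral q hq
  | zero => exact isIntegral_zero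
  | one => exact isIntegral_one
  | add x y _ _ hx hy => exact hx.add hy
  | neg x _ hx => exact hx.neg
  | mul x y _ _ hx hy => exact hx.mul hy

lemma one_not_2RR (hq : q ≠ 0) : ¬ ∃ z ∈ RR q, (1:ℝ) = 2 * z := by
  rintro ⟨z, hz, h1⟩
  have hzint := mem_RR_integral q hq z hz
  have : z = (1:ℝ)/2 := by linarith
  rw [this] at hzint
  exact half_not_integral hzint

/-! ### Chebyshev-type sequences -/

noncomputable def cheb (m : ℝ) : ℕ → ℝ
  | 0 => 0
  | 1 => 1
  | (n+2) => m * cheb m (n+1) - cheb m n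

lemma cheb_sin (φ : ℝ) (m : ℝ) (hm : m = 2 * Real.cos φ) :
    ∀ n : ℕ, Real.sin φ * cheb m n = Real.sin (n * φ) := by
  intro n
  induction n using Nat.twoStepInduction with
  | zero => simp [cheb]
  | one => simp [cheb]
  | more n ih1 ih2 =>
    have hrec : cheb m (n+2) = m * cheb m (n+1) - cheb m n := rfl
    have h1 : ((n+2 : ℕ) : ℝ) * φ = ((n+1 : ℕ) : ℝ) * φ + φ := by push_cast; ring
    have h2 : ((n : ℕ) : ℝ) * φ = ((n+1 : ℕ) : ℝ) * φ - φ := by push_cast; ring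
    rw [h2, Real.sin_sub] at ih1
    rw [hrec, h1, Real.sin_add]
    linear_combination m * ih2 - ih1 + Real.sin (((n+1:ℕ):ℝ) * φ) * hm

lemma cheb_mem (m : ℝ) (hm : m ∈ RR q) : ∀ n, cheb m n ∈ RR q := by
  intro n
  induction n using Nat.twoStepInduction with
  | zero => exact zero_mem _
  | one => exact one_mem _
  | more n ih1 ih2 =>
    have hrec : cheb m (n+2) = m * cheb m (n+1) - cheb m n := rfl
    rw [hrec]; exact sub_mem (mul_mem hm ih2) ih1

noncomputable def u : ℕ → ℝ := cheb (lam q)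

lemma u_mem (n : ℕ) : u q n ∈ RR q := cheb_mem q _ (lam_mem q) n

lemma sinq_pos (hq3 : 3 ≤ q) : 0 < Real.sin (π / q) := by
  apply Real.sin_pos_of_pos_of_lt_pi
  · positivity
  · have : (1:ℝ) < q := by exact_mod_cast by omega
    calc π / q < π / 1 := by
          apply div_lt_div_of_pos_left Real.pi_pos (by norm_num) this
      _ = π := by norm_num

lemma u_sin (n : ℕ) : Real.sin (π/q) * u q n = Real.sin (n * (π/q)) :=
  cheb_sin (π/q) (lam q) rfl n

lemma u_q_eq (hq3 : 3 ≤ q) : u q q = 0 := by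
  have h := u_sin q q
  have hθ : (q : ℝ) * (π / q) = π := by field_simp
  rw [hθ, Real.sin_pi] at h
  have := sinq_pos q hq3
  nlinarith [h]

lemma u_qsub_eq (hq3 : 3 ≤ q) : u q (q - 1) = 1 := by
  have h := u_sin q (q-1)
  have hθ : ((q - 1 : ℕ) : ℝ) * (π / q) = π - π/q := by
    have : ((q - 1 : ℕ) : ℝ) = (q : ℝ) - 1 := by
      have : 1 ≤ q := by omega
      push_cast [this]; ring
    rw [this]; field_simp
  rw [hθ, Real.sin_pi_sub] at h
  have := sinq_pos q hq3
  nlinarith [h]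

lemma u_qadd_eq (hq3 : 3 ≤ q) : u q (q + 1) = -1 := by
  have h := u_sin q (q+1)
  have hθ : ((q + 1 : ℕ) : ℝ) * (π / q) = π + π/q := by
    have hq0 : (q:ℝ) ≠ 0 := by positivity
    push_cast; field_simp
  rw [hθ, Real.sin_add] at h
  simp at h
  have := sinq_pos q hq3
  nlinarith [h]

lemma lam_unit (hq : q.Prime) (hq3 : 3 ≤ q) : ∃ x ∈ RR q, lam q * x = 1 := by
  have hodd : Odd q := hq.odd_of_ne_two (by omega)
  set m := (q - 1)/2 with hm
  have hq1 : q - 1 = 2 * m := by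
    obtain ⟨k, hk⟩ := hodd; omega
  have hmu : lam q ^ 2 - 2 = 2 * Real.cos (2 * (π/q)) := by
    rw [Real.cos_two_mul]; simp [lam]; ring
  have hmem : lam q ^2 - 2 ∈ RR q := by
    refine sub_mem ?_ ?_
    · rw [sq]; exact mul_mem (lam_mem q) (lam_mem q)
    · have : (2:ℝ) = 1 + 1 := by norm_num
      rw [this]; exact add_mem (one_mem _) (one_mem _)
  refine ⟨cheb (lam q ^2 - 2) m, cheb_mem q _ hmem m, ?_⟩
  have h := cheb_sin (2 * (π/q)) (lam q ^2 - 2) hmu m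
  have hθ : (m : ℝ) * (2 * (π/q)) = π - π/q := by
    have hcast : ((q-1 :ℕ) : ℝ) = (q:ℝ) - 1 := by
      have : 1 ≤ q := by omega
      push_cast [this]; ring
    have : ((2*m : ℕ) : ℝ) = (q:ℝ) - 1 := by rw [← hq1, hcast]
    have h2m : (2:ℝ) * m = (q:ℝ) - 1 := by push_cast at this ⊢; linarith
    have hq0 : (q:ℝ) ≠ 0 := by positivity
    rw [show (m:ℝ) * (2*(π/q)) = (2*(m:ℝ))*(π/q) by ring, h2m]
    field_simp
  rw [hθ, Real.sin_pi_sub] at h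
  have hdouble : Real.sin (2*(π/q)) = lam q * Real.sin (π/q) := by
    rw [Real.sin_two_mul, lam]; ring
  rw [hdouble] at h
  have hs := sinq_pos q hq3
  have hcalc : Real.sin (π/q) * (lam q * cheb (lam q^2-2) m) = Real.sin (π/q) * 1 := by
    rw [mul_one]; linear_combination h
  exact mul_left_cancel₀ (ne_of_gt hs) hcalc

lemma lam_not_2RR (hq : q.Prime) (hq3 : 3 ≤ q) : ¬ ∃ z ∈ RR q, lam q = 2 * z := by
  rintro ⟨z, hz, h⟩
  obtain ⟨x, hx, hlx⟩ := lam_unit q hq hq3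
  refine one_not_2RR q (by omega) ⟨z * x, mul_mem hz hx, ?_⟩
  rw [← hlx, h]; ring

/-! ### The reduction mod 2 homomorphism -/

noncomputable def entriesIn : Subgroup (Matrix.SpecialLinearGroup (Fin 2) ℝ) where
  carrier := {g | ∀ i j, (g : Matrix (Fin 2) (Fin 2) ℝ) i j ∈ RR q}
  one_mem' := by
    intro i j
    fin_cases i <;> fin_cases j <;>
      simp [Matrix.SpecialLinearGroup.coe_one, Matrix.one_apply] <;>
      first | exact one_mem _ | exact zero_mem _
  mul_mem' := by
    intro a b ha hb i j
    rw [Matrix.SpecialLinearGroup.coe_mul, Matrix.mul_apply, Fin.sum_univ_two]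
    exact add_mem (mul_mem (ha i 0) (hb 0 j)) (mul_mem (ha i 1) (hb 1 j))
  inv_mem' := by
    intro a ha i j
    rw [Matrix.SpecialLinearGroup.coe_inv, Matrix.adjugate_fin_two]
    fin_cases i <;> fin_cases j <;> simp <;>
      first
        | exact ha _ _ | exact neg_mem (ha _ _)

lemma hecke_le_entriesIn : HeckeSL q ≤ entriesIn q := by
  rw [HeckeSL, Subgroup.closure_le]
  rintro x (rfl | rfl) <;> intro i j <;> fin_cases i <;> fin_cases j <;>
    simp [Smat, Tmat] <;>
    first
      | exact one_mem _ | exact zero_mem _ | exact neg_mem (one_mem _)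
      | exact lam_mem q

lemma entry_mem (g : HeckeSL q) (i j : Fin 2) :
    ((g : Matrix.SpecialLinearGroup (Fin 2) ℝ) : Matrix (Fin 2) (Fin 2) ℝ) i j ∈ RR q :=
  hecke_le_entriesIn q g.2 i j

noncomputable def II : Ideal (RR q) := Ideal.span {2}

noncomputable abbrev QQ := (RR q) ⧸ (II q)

noncomputable def mk2 (x : ℝ) (hx : x ∈ RR q) : QQ q := Ideal.Quotient.mk (II q) ⟨x, hx⟩

lemma mk2_eq_iff {x y : ℝ} (hx : x ∈ RR q) (hy : y ∈ RR q) :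
    mk2 q x hx = mk2 q y hy ↔ ∃ z ∈ RR q, x - y = 2 * z := by
  rw [mk2, mk2, Ideal.Quotient.mk_eq_mk_iff_sub_mem, II, Ideal.mem_span_singleton]
  constructor
  · rintro ⟨⟨z, hz⟩, h⟩
    refine ⟨z, hz, ?_⟩
    have := congrArg (Subtype.val) h
    simpa [show ((2 : RR q) : ℝ) = 2 from rfl] using this
  · rintro ⟨z, hz, h⟩
    exact ⟨⟨z, hz⟩, Subtype.ext (by simpa [show ((2 : RR q) : ℝ) = 2 from rfl] using h)⟩

lemma mk2_congr {x y : ℝ} (hx : x ∈ RR q) (h : x = y) :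
    mk2 q x hx = mk2 q y (h ▸ hx) := by subst h; rfl

lemma mk2_mul {x y : ℝ} (hx : x ∈ RR q) (hy : y ∈ RR q) :
    mk2 q x hx * mk2 q y hy = mk2 q (x*y) (mul_mem hx hy) := by
  rw [mk2, mk2, mk2, ← RingHom.map_mul]; rfl

lemma mk2_add {x y : ℝ} (hx : x ∈ RR q) (hy : y ∈ RR q) :
    mk2 q x hx + mk2 q y hy = mk2 q (x+y) (add_mem hx hy) := by
  rw [mk2, mk2, mk2, ← RingHom.map_add]; rfl

lemma mk2_sub {x y : ℝ} (hx : x ∈ RR q) (hy : y ∈ RR q) :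
    mk2 q x hx - mk2 q y hy = mk2 q (x-y) (sub_mem hx hy) := by
  rw [mk2, mk2, mk2, ← RingHom.map_sub]; rfl

lemma mk2_one : mk2 q 1 (one_mem _) = 1 := by
  rw [mk2]; exact RingHom.map_one _

lemma mk2_zero : mk2 q 0 (zero_mem _) = 0 := by
  rw [mk2]; exact RingHom.map_zero _

noncomputable def phi : (HeckeSL q) →* Matrix.SpecialLinearGroup (Fin 2) (QQ q) where
  toFun g := ⟨Matrix.of fun i j => mk2 q _ (entry_mem q g i j), by
    rw [Matrix.det_fin_two]
    simp only [Matrix.of_apply]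
    rw [mk2_mul, mk2_mul, mk2_sub]
    have hdet : ((g : Matrix.SpecialLinearGroup (Fin 2) ℝ) : Matrix (Fin 2) (Fin 2) ℝ) 0 0 *
        ((g : Matrix.SpecialLinearGroup (Fin 2) ℝ) : Matrix (Fin 2) (Fin 2) ℝ) 1 1 -
        ((g : Matrix.SpecialLinearGroup (Fin 2) ℝ) : Matrix (Fin 2) (Fin 2) ℝ) 0 1 *
        ((g : Matrix.SpecialLinearGroup (Fin 2) ℝ) : Matrix (Fin 2) (Fin 2) ℝ) 1 0 = 1 := by
      rw [← Matrix.det_fin_two]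
      exact (g : Matrix.SpecialLinearGroup (Fin 2) ℝ).2
    rw [mk2_congr q _ hdet, mk2_one]⟩
  map_one' := by
    apply Subtype.ext
    show (Matrix.of fun i j => mk2 q _ (entry_mem q 1 i j)) = _
    ext i j
    rw [Matrix.SpecialLinearGroup.coe_one, Matrix.of_apply]
    fin_cases i <;> fin_cases j
    · rw [mk2_congr q _ (show _ = (1:ℝ) by simp), mk2_one]; simp [Matrix.one_apply]
    · rw [mk2_congr q _ (show _ = (0:ℝ) by simp), mk2_zero]; simp [Matrix.one_apply]
    · rw [mk2_congr q _ (show _ = (0:ℝ) by simp), mk2_zero]; simp [Matrix.one_apply]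
    · rw [mk2_congr q _ (show _ = (1:ℝ) by simp), mk2_one]; simp [Matrix.one_apply]
  map_mul' := by
    intro g h
    apply Subtype.ext
    show (Matrix.of fun i j => mk2 q _ (entry_mem q (g*h) i j)) = _
    ext i j
    have hent : ((((g*h) : HeckeSL q) : Matrix.SpecialLinearGroup (Fin 2) ℝ) :
        Matrix (Fin 2) (Fin 2) ℝ) i j
        = ((g : Matrix.SpecialLinearGroup (Fin 2) ℝ) : Matrix (Fin 2) (Fin 2) ℝ) i 0 *
          ((h : Matrix.SpecialLinearGroup (Fin 2) ℝ) : Matrix (Fin 2) (Fin 2) ℝ) 0 j +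
          ((g : Matrix.SpecialLinearGroup (Fin 2) ℝ) : Matrix (Fin 2) (Fin 2) ℝ) i 1 *
          ((h : Matrix.SpecialLinearGroup (Fin 2) ℝ) : Matrix (Fin 2) (Fin 2) ℝ) 1 j := by
      rw [show (((g*h) : HeckeSL q) : Matrix.SpecialLinearGroup (Fin 2) ℝ)
          = (g : Matrix.SpecialLinearGroup (Fin 2) ℝ) * (h : Matrix.SpecialLinearGroup (Fin 2) ℝ)
          from rfl, Matrix.SpecialLinearGroup.coe_mul, Matrix.mul_apply, Fin.sum_univ_two]
    rw [Matrix.of_apply, mk2_congr q _ hent]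
    show _ = ((Matrix.of fun i j => mk2 q _ (entry_mem q g i j)) *
      (Matrix.of fun i j => mk2 q _ (entry_mem q h i j))) i j
    rw [Matrix.mul_apply, Fin.sum_univ_two]
    simp only [Matrix.of_apply]
    rw [mk2_mul, mk2_mul, mk2_add]

lemma phi_coe (g : HeckeSL q) :
    ((phi q g : Matrix.SpecialLinearGroup (Fin 2) (QQ q)) : Matrix (Fin 2) (Fin 2) (QQ q))
      = Matrix.of fun i j => mk2 q _ (entry_mem q g i j) := rfl

lemma phi_eq_phi_iff (g h : HeckeSL q) :
    phi q g = phi q h ↔ ∀ i j, ∃ z ∈ RR q,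
      ((g : Matrix.SpecialLinearGroup (Fin 2) ℝ) : Matrix (Fin 2) (Fin 2) ℝ) i j
        - ((h : Matrix.SpecialLinearGroup (Fin 2) ℝ) : Matrix (Fin 2) (Fin 2) ℝ) i j = 2 * z := by
  rw [Matrix.SpecialLinearGroup.ext_iff]
  apply forall_congr'; intro i
  apply forall_congr'; intro j
  rw [phi_coe, phi_coe, Matrix.of_apply, Matrix.of_apply, mk2_eq_iff]

end Hecke19
-- continuing namespace Hecke19, appended to full.lean for testing
namespace Hecke19

variable (q : ℕ)

noncomputable def Selt : HeckeSL q := ⟨Smat, Subgroup.subset_closure (Set.mem_insert _ _)⟩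
noncomputable def Telt : HeckeSL q :=
  ⟨Tmat q, Subgroup.subset_closure (Set.mem_insert_of_mem _ rfl)⟩
noncomputable def celt : HeckeSL q := Selt q * Telt q

lemma Smat_coe : (Smat : Matrix (Fin 2) (Fin 2) ℝ) = !![0,1;-1,0] := rfl
lemma Tmat_coe : (Tmat q : Matrix (Fin 2) (Fin 2) ℝ) = !![1, lam q; 0, 1] := rfl

lemma celt_coe : ((celt q : Matrix.SpecialLinearGroup (Fin 2) ℝ) : Matrix (Fin 2) (Fin 2) ℝ)
    = !![0, 1; -1, -(lam q)] := by
  show ((Smat * Tmat q : Matrix.SpecialLinearGroup (Fin 2) ℝ) : Matrix (Fin 2) (Fin 2) ℝ) = _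
  rw [Matrix.SpecialLinearGroup.coe_mul, Smat_coe, Tmat_coe q, Matrix.mul_fin_two]
  norm_num

lemma S2_coe : (((Selt q * Selt q : HeckeSL q) : Matrix.SpecialLinearGroup (Fin 2) ℝ) :
    Matrix (Fin 2) (Fin 2) ℝ) = !![-1, 0; 0, -1] := by
  show ((Smat * Smat : Matrix.SpecialLinearGroup (Fin 2) ℝ) : Matrix (Fin 2) (Fin 2) ℝ) = _
  rw [Matrix.SpecialLinearGroup.coe_mul, Smat_coe, Matrix.mul_fin_two]
  norm_num

lemma T2_coe : (((Telt q * Telt q : HeckeSL q) : Matrix.SpecialLinearGroup (Fin 2) ℝ) :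
    Matrix (Fin 2) (Fin 2) ℝ) = !![1, 2 * lam q; 0, 1] := by
  show ((Tmat q * Tmat q : Matrix.SpecialLinearGroup (Fin 2) ℝ) : Matrix (Fin 2) (Fin 2) ℝ) = _
  rw [Matrix.SpecialLinearGroup.coe_mul, Tmat_coe q, Matrix.mul_fin_two]
  norm_num
  ring

lemma SCS_coe : (((Selt q * celt q * Selt q : HeckeSL q) :
    Matrix.SpecialLinearGroup (Fin 2) ℝ) : Matrix (Fin 2) (Fin 2) ℝ)
    = !![lam q, -1; 1, 0] := by
  show ((Smat * (Smat * Tmat q) * Smat : Matrix.SpecialLinearGroup (Fin 2) ℝ) :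
    Matrix (Fin 2) (Fin 2) ℝ) = _
  rw [Matrix.SpecialLinearGroup.coe_mul, Matrix.SpecialLinearGroup.coe_mul,
    Matrix.SpecialLinearGroup.coe_mul, Smat_coe, Tmat_coe q, Matrix.mul_fin_two,
    Matrix.mul_fin_two, Matrix.mul_fin_two]
  norm_num

lemma cinv_coe : (((celt q)⁻¹ : HeckeSL q).val : Matrix (Fin 2) (Fin 2) ℝ)
    = !![-(lam q), -1; 1, 0] := by
  have h1 : (((celt q)⁻¹ : HeckeSL q) : Matrix.SpecialLinearGroup (Fin 2) ℝ)
      = ((celt q : Matrix.SpecialLinearGroup (Fin 2) ℝ))⁻¹ := rfl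
  rw [h1, Matrix.SpecialLinearGroup.coe_inv, celt_coe, Matrix.adjugate_fin_two]
  norm_num

lemma CS_coe : (((celt q * Selt q : HeckeSL q) : Matrix.SpecialLinearGroup (Fin 2) ℝ) :
    Matrix (Fin 2) (Fin 2) ℝ) = !![-1, 0; lam q, -1] := by
  show (((Smat * Tmat q) * Smat : Matrix.SpecialLinearGroup (Fin 2) ℝ) :
    Matrix (Fin 2) (Fin 2) ℝ) = _
  rw [Matrix.SpecialLinearGroup.coe_mul, Matrix.SpecialLinearGroup.coe_mul,
     Smat_coe, Tmat_coe q, Matrix.mul_fin_two, Matrix.mul_fin_two]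
  norm_num

lemma celt_pow_coe (n : ℕ) : ((((celt q)^(n+1) : HeckeSL q) :
    Matrix.SpecialLinearGroup (Fin 2) ℝ) : Matrix (Fin 2) (Fin 2) ℝ)
    = !![(-1:ℝ)^n * u q n, (-1:ℝ)^n * u q (n+1);
         (-1:ℝ)^(n+1) * u q (n+1), (-1:ℝ)^(n+1) * u q (n+2)] := by
  induction n with
  | zero =>
    rw [pow_one, celt_coe]
    have h0 : u q 0 = 0 := rfl
    have h1 : u q 1 = 1 := rfl
    have h2 : u q 2 = lam q := by
      show lam q * cheb (lam q) 1 - cheb (lam q) 0 = lam q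
      simp [cheb]
    rw [h0, h1, h2]
    norm_num
  | succ n ih =>
    have hp : ((celt q)^(n+1+1) : HeckeSL q) = ((celt q)^(n+1)) * celt q := by
      rw [pow_succ]
    rw [hp]
    have hcoe : ((((celt q)^(n+1) * celt q : HeckeSL q) :
        Matrix.SpecialLinearGroup (Fin 2) ℝ) : Matrix (Fin 2) (Fin 2) ℝ)
        = ((((celt q)^(n+1) : HeckeSL q) : Matrix.SpecialLinearGroup (Fin 2) ℝ) :
            Matrix (Fin 2) (Fin 2) ℝ) *
          (((celt q : HeckeSL q) : Matrix.SpecialLinearGroup (Fin 2) ℝ) :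
            Matrix (Fin 2) (Fin 2) ℝ) := by
      rw [show (((celt q)^(n+1) * celt q : HeckeSL q) : Matrix.SpecialLinearGroup (Fin 2) ℝ)
          = (((celt q)^(n+1) : HeckeSL q) : Matrix.SpecialLinearGroup (Fin 2) ℝ) *
            ((celt q : HeckeSL q) : Matrix.SpecialLinearGroup (Fin 2) ℝ) from rfl,
        Matrix.SpecialLinearGroup.coe_mul]
    rw [hcoe, ih, celt_coe, Matrix.mul_fin_two]
    have hu2 : u q (n+2) = lam q * u q (n+1) - u q n := rfl
    have hu3 : u q (n+3) = lam q * u q (n+2) - u q (n+1) := rfl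
    ext i j
    fin_cases i <;> fin_cases j <;>
      simp [Matrix.cons_val_zero, Matrix.cons_val_one, Matrix.head_cons] <;>
      rw [pow_succ] <;> try rw [hu3]
    · ring
    · rw [hu2]; ring
    · ring
    · rw [hu2]; ring

lemma celt_pow_q (hq : q.Prime) (hq3 : 3 ≤ q) : (celt q)^q = 1 := by
  have hodd : Odd q := hq.odd_of_ne_two (by omega)
  have hq1 : q - 1 + 1 = q := by omega
  apply Subtype.ext
  apply Subtype.ext
  show ((((celt q)^q : HeckeSL q) : Matrix.SpecialLinearGroup (Fin 2) ℝ) :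
    Matrix (Fin 2) (Fin 2) ℝ) = _
  rw [← hq1, celt_pow_coe]
  rw [hq1, u_q_eq q hq3, u_qsub_eq q hq3]
  rw [show q - 1 + 2 = q + 1 by omega, u_qadd_eq q hq3]
  have hev : (-1:ℝ)^(q-1) = 1 := by
    apply Even.neg_one_pow
    rcases hodd with ⟨k, hk⟩
    exact ⟨k, by omega⟩
  rw [hev, hodd.neg_one_pow]
  have : ((1 : HeckeSL q) : Matrix.SpecialLinearGroup (Fin 2) ℝ) = 1 := rfl
  rw [this, Matrix.SpecialLinearGroup.coe_one, Matrix.one_fin_two]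
  norm_num

end Hecke19
namespace Hecke19

variable (q : ℕ)

/-! ### facts about the images in `SL(2, QQ)` -/

-- abbreviations
noncomputable def sbar : Matrix.SpecialLinearGroup (Fin 2) (QQ q) := phi q (Selt q)
noncomputable def cbar : Matrix.SpecialLinearGroup (Fin 2) (QQ q) := phi q (celt q)

lemma sbar_sq : sbar q * sbar q = 1 := by
  rw [sbar, ← map_mul, ← map_one (phi q)]
  rw [phi_eq_phi_iff]
  intro i j
  rw [show ((1 : HeckeSL q) : Matrix.SpecialLinearGroup (Fin 2) ℝ) = 1 from rfl,
    Matrix.SpecialLinearGroup.coe_one, S2_coe, Matrix.one_fin_two]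
  fin_cases i <;> fin_cases j
  · exact ⟨-1, neg_mem (one_mem _), by norm_num⟩
  · exact ⟨0, zero_mem _, by norm_num⟩
  · exact ⟨0, zero_mem _, by norm_num⟩
  · exact ⟨-1, neg_mem (one_mem _), by norm_num⟩

lemma tbar_sq : phi q (Telt q) * phi q (Telt q) = 1 := by
  rw [← map_mul, ← map_one (phi q)]
  rw [phi_eq_phi_iff]
  intro i j
  rw [show ((1 : HeckeSL q) : Matrix.SpecialLinearGroup (Fin 2) ℝ) = 1 from rfl,
    Matrix.SpecialLinearGroup.coe_one, T2_coe, Matrix.one_fin_two]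
  fin_cases i <;> fin_cases j
  · exact ⟨0, zero_mem _, by norm_num⟩
  · exact ⟨lam q, lam_mem q, by norm_num⟩
  · exact ⟨0, zero_mem _, by norm_num⟩
  · exact ⟨0, zero_mem _, by norm_num⟩

lemma cbar_pow_q (hq : q.Prime) (hq3 : 3 ≤ q) : (cbar q)^q = 1 := by
  rw [cbar, ← map_pow, celt_pow_q q hq hq3, map_one]

lemma cbar_ne_one (hq3 : 3 ≤ q) : cbar q ≠ 1 := by
  intro h
  rw [cbar, ← map_one (phi q), phi_eq_phi_iff] at h
  obtain ⟨z, hz, hzz⟩ := h 0 1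
  rw [celt_coe, show ((1 : HeckeSL q) : Matrix.SpecialLinearGroup (Fin 2) ℝ) = 1 from rfl,
    Matrix.SpecialLinearGroup.coe_one, Matrix.one_fin_two] at hzz
  norm_num at hzz
  exact one_not_2RR q (by omega) ⟨z, hz, hzz⟩

lemma sbar_ne_one (hq3 : 3 ≤ q) : sbar q ≠ 1 := by
  intro h
  rw [sbar, ← map_one (phi q), phi_eq_phi_iff] at h
  obtain ⟨z, hz, hzz⟩ := h 0 1
  rw [show ((Selt q : HeckeSL q) : Matrix.SpecialLinearGroup (Fin 2) ℝ) = Smat from rfl,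
    Smat_coe, show ((1 : HeckeSL q) : Matrix.SpecialLinearGroup (Fin 2) ℝ) = 1 from rfl,
    Matrix.SpecialLinearGroup.coe_one, Matrix.one_fin_two] at hzz
  norm_num at hzz
  exact one_not_2RR q (by omega) ⟨z, hz, hzz⟩

lemma sbar_inv : (sbar q)⁻¹ = sbar q := inv_eq_of_mul_eq_one_right (sbar_sq q)

lemma conj_cbar : sbar q * cbar q * (sbar q)⁻¹ = (cbar q)⁻¹ := by
  rw [sbar_inv, sbar, cbar, ← map_mul, ← map_mul, ← map_inv]
  rw [phi_eq_phi_iff]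
  intro i j
  rw [SCS_coe, cinv_coe]
  fin_cases i <;> fin_cases j
  · exact ⟨lam q, lam_mem q, by norm_num; ring⟩
  · exact ⟨0, zero_mem _, by norm_num⟩
  · exact ⟨0, zero_mem _, by norm_num⟩
  · exact ⟨0, zero_mem _, by norm_num⟩

/-- lower-triangular subgroup of SL2 over QQ -/
noncomputable def BB : Subgroup (Matrix.SpecialLinearGroup (Fin 2) (QQ q)) where
  carrier := {g | (g : Matrix (Fin 2) (Fin 2) (QQ q)) 0 1 = 0}
  one_mem' := by
    show ((1 : Matrix.SpecialLinearGroup (Fin 2) (QQ q)) :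
      Matrix (Fin 2) (Fin 2) (QQ q)) 0 1 = 0
    rw [Matrix.SpecialLinearGroup.coe_one]
    simp [Matrix.one_apply]
  mul_mem' := by
    intro a b ha hb
    show ((a * b : Matrix.SpecialLinearGroup (Fin 2) (QQ q)) :
      Matrix (Fin 2) (Fin 2) (QQ q)) 0 1 = 0
    rw [Matrix.SpecialLinearGroup.coe_mul, Matrix.mul_apply, Fin.sum_univ_two]
    rw [show ((a : Matrix (Fin 2) (Fin 2) (QQ q)) 0 1 = 0) from ha,
      show ((b : Matrix (Fin 2) (Fin 2) (QQ q)) 0 1 = 0) from hb]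
    ring
  inv_mem' := by
    intro a ha
    show ((a⁻¹ : Matrix.SpecialLinearGroup (Fin 2) (QQ q)) :
      Matrix (Fin 2) (Fin 2) (QQ q)) 0 1 = 0
    rw [Matrix.SpecialLinearGroup.coe_inv, Matrix.adjugate_fin_two]
    show -(a : Matrix (Fin 2) (Fin 2) (QQ q)) 0 1 = 0
    rw [show ((a : Matrix (Fin 2) (Fin 2) (QQ q)) 0 1 = 0) from ha]
    ring

lemma cbar_not_BB (hq3 : 3 ≤ q) : cbar q ∉ BB q := by
  intro h
  have h01 : ((cbar q : Matrix (Fin 2) (Fin 2) (QQ q)) 0 1 = 0) := h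
  rw [cbar, phi_coe, Matrix.of_apply] at h01
  rw [show (0 : QQ q) = mk2 q 0 (zero_mem _) from (mk2_zero q).symm] at h01
  rw [mk2_eq_iff] at h01
  obtain ⟨z, hz, hzz⟩ := h01
  rw [celt_coe] at hzz
  norm_num at hzz
  exact one_not_2RR q (by omega) ⟨z, hz, hzz⟩

noncomputable def ebar : Matrix.SpecialLinearGroup (Fin 2) (QQ q) := phi q (celt q * Selt q)

lemma ebar_BB : ebar q ∈ BB q := by
  show ((ebar q : Matrix (Fin 2) (Fin 2) (QQ q)) 0 1 = 0)
  rw [ebar, phi_coe, Matrix.of_apply]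
  rw [show (0 : QQ q) = mk2 q 0 (zero_mem _) from (mk2_zero q).symm]
  rw [mk2_eq_iff]
  exact ⟨0, zero_mem _, by rw [CS_coe]; norm_num⟩

lemma ebar_ne_one (hq : q.Prime) (hq3 : 3 ≤ q) : ebar q ≠ 1 := by
  intro h
  rw [ebar, ← map_one (phi q), phi_eq_phi_iff] at h
  obtain ⟨z, hz, hzz⟩ := h 1 0
  rw [CS_coe, show ((1 : HeckeSL q) : Matrix.SpecialLinearGroup (Fin 2) ℝ) = 1 from rfl,
    Matrix.SpecialLinearGroup.coe_one, Matrix.one_fin_two] at hzz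
  norm_num at hzz
  exact lam_not_2RR q hq hq3 ⟨z, hz, hzz⟩

lemma ebar_eq : ebar q = cbar q * sbar q := by rw [ebar, map_mul]; rfl

end Hecke19
namespace Hecke19

variable (q : ℕ)

noncomputable def CC : Subgroup (Matrix.SpecialLinearGroup (Fin 2) (QQ q)) :=
  Subgroup.zpowers (cbar q)

noncomputable def DD : Subgroup (Matrix.SpecialLinearGroup (Fin 2) (QQ q)) :=
  Subgroup.closure {sbar q, cbar q}

section main
variable (hq : q.Prime) (hq3 : 3 ≤ q)
include hq hq3

lemma orderOf_cbar : orderOf (cbar q) = q := by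
  haveI : Fact q.Prime := ⟨hq⟩
  exact orderOf_eq_prime (cbar_pow_q q hq hq3) (cbar_ne_one q hq3)

lemma card_CC : Nat.card (CC q) = q := by
  rw [CC, Nat.card_zpowers, orderOf_cbar q hq hq3]

lemma orderOf_sbar : orderOf (sbar q) = 2 := by
  haveI : Fact (Nat.Prime 2) := ⟨Nat.prime_two⟩
  exact orderOf_eq_prime (by rw [pow_two]; exact sbar_sq q) (sbar_ne_one q hq3)

lemma sbar_not_CC : sbar q ∉ CC q := by
  intro h
  have h1 : orderOf (sbar q) ∣ Nat.card (CC q) := Subgroup.orderOf_dvd_natCard _ h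
  rw [card_CC q hq hq3, orderOf_sbar q hq hq3] at h1
  have : Odd q := hq.odd_of_ne_two (by omega)
  rcases this with ⟨k, hk⟩
  omega

lemma conj_zpow_mem (n : ℤ) : sbar q * (cbar q)^n * (sbar q)⁻¹ ∈ CC q := by
  have : sbar q * (cbar q)^n * (sbar q)⁻¹ = (sbar q * cbar q * (sbar q)⁻¹)^n :=
    conj_zpow.symm
  rw [this, conj_cbar]
  exact Subgroup.zpow_mem _ (Subgroup.inv_mem _ (Subgroup.mem_zpowers _)) n

lemma sbar_normalizes : sbar q ∈ Subgroup.normalizer (CC q : Set _) := by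
  rw [Subgroup.mem_normalizer_iff]
  intro h
  constructor
  · rintro ⟨n, rfl⟩
    exact conj_zpow_mem q hq hq3 n
  · rintro ⟨n, hn⟩
    change (cbar q)^n = sbar q * h * (sbar q)⁻¹ at hn
    have h2 : (sbar q)⁻¹ * ((cbar q)^n) * ((sbar q)⁻¹)⁻¹ = h := by
      rw [hn]; group
    rw [← h2, sbar_inv]
    exact conj_zpow_mem q hq hq3 n

lemma DD_le_normalizer : DD q ≤ Subgroup.normalizer (CC q : Set _) := by
  rw [DD, Subgroup.closure_le]
  rintro x (rfl | rfl)
  · exact sbar_normalizes q hq hq3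
  · exact Subgroup.le_normalizer (Subgroup.mem_zpowers _)

lemma cbar_mem_DD : cbar q ∈ DD q := Subgroup.subset_closure (Set.mem_insert_of_mem _ rfl)
lemma sbar_mem_DD : sbar q ∈ DD q := Subgroup.subset_closure (Set.mem_insert _ _)

lemma CC_le_DD : CC q ≤ DD q := by
  rw [CC]
  exact (Subgroup.zpowers_le).mpr (cbar_mem_DD q hq hq3)

lemma CCsub_normal : ((CC q).subgroupOf (DD q)).Normal := by
  constructor
  intro n hn g
  rw [Subgroup.mem_subgroupOf] at hn ⊢
  have hg := DD_le_normalizer q hq hq3 g.2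
  rw [Subgroup.mem_normalizer_iff] at hg
  exact (hg n).mp hn

noncomputable def sd : DD q := ⟨sbar q, sbar_mem_DD q hq hq3⟩

lemma card_quot :
    Nat.card ((DD q) ⧸ ((CC q).subgroupOf (DD q))) = 2 := by
  haveI := CCsub_normal q hq hq3
  have hsur : Function.Surjective (QuotientGroup.mk' ((CC q).subgroupOf (DD q))) :=
    QuotientGroup.mk'_surjective _
  -- the quotient is generated by the image of sd
  have htop : Subgroup.zpowers (QuotientGroup.mk' ((CC q).subgroupOf (DD q)) (sd q hq hq3)) = ⊤ := by
    have h1 : Subgroup.closure ((DD q).subtype ⁻¹' {sbar q, cbar q}) = ⊤ :=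
      Subgroup.closure_preimage_eq_top ({sbar q, cbar q} : Set _)
    have h2 : Subgroup.map (QuotientGroup.mk' ((CC q).subgroupOf (DD q))) ⊤ = ⊤ := by
      rw [← MonoidHom.range_eq_map]
      exact MonoidHom.range_eq_top_of_surjective _ hsur
    rw [← h1, MonoidHom.map_closure] at h2
    rw [eq_top_iff, ← h2, Subgroup.closure_le]
    rintro _ ⟨y, hy, rfl⟩
    rcases hy with hy | hy
    · have : y = sd q hq hq3 := Subtype.ext hy
      rw [this]
      exact Subgroup.mem_zpowers _
    · have hyC : y ∈ (CC q).subgroupOf (DD q) := by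
        rw [Subgroup.mem_subgroupOf]
        show (y : Matrix.SpecialLinearGroup (Fin 2) (QQ q)) ∈ CC q
        rw [show ((y : Matrix.SpecialLinearGroup (Fin 2) (QQ q))) = cbar q from hy]
        exact Subgroup.mem_zpowers _
      have hπy : QuotientGroup.mk' ((CC q).subgroupOf (DD q)) y = 1 := by
        rw [QuotientGroup.mk'_apply, QuotientGroup.eq_one_iff]
        exact hyC
      rw [hπy]
      exact one_mem _
  have hcard : Nat.card ((DD q) ⧸ ((CC q).subgroupOf (DD q))) = orderOf (QuotientGroup.mk' ((CC q).subgroupOf (DD q)) (sd q hq hq3)) := by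
    rw [← Nat.card_zpowers, htop]
    exact (Nat.card_congr (Equiv.Set.univ _)).symm
  rw [hcard]
  haveI : Fact (Nat.Prime 2) := ⟨Nat.prime_two⟩
  apply orderOf_eq_prime
  · rw [← map_pow]
    have : (sd q hq hq3)^2 = 1 := by
      apply Subtype.ext
      show sbar q ^ 2 = 1
      rw [pow_two]; exact sbar_sq q
    rw [this, map_one]
  · intro h
    rw [QuotientGroup.mk'_apply, QuotientGroup.eq_one_iff, Subgroup.mem_subgroupOf] at h
    exact sbar_not_CC q hq hq3 h

lemma card_DD : Nat.card (DD q) = 2 * q := by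
  have h1 := Subgroup.card_mul_index ((CC q).subgroupOf (DD q))
  have h2 : Nat.card ((CC q).subgroupOf (DD q)) = q := by
    rw [Nat.card_congr (Subgroup.subgroupOfEquivOfLe (CC_le_DD q hq hq3)).toEquiv]
    exact card_CC q hq hq3
  have h3 : ((CC q).subgroupOf (DD q)).index = 2 := by
    rw [Subgroup.index]
    exact card_quot q hq hq3
  rw [h2, h3] at h1
  omega

lemma range_phi : (phi q).range = DD q := by
  rw [MonoidHom.range_eq_map]
  have h1 : (⊤ : Subgroup (HeckeSL q)) =
      Subgroup.closure ((HeckeSL q).subtype ⁻¹' {Smat, Tmat q}) :=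
    (Subgroup.closure_preimage_eq_top ({Smat, Tmat q} : Set _)).symm
  rw [h1, MonoidHom.map_closure]
  apply le_antisymm
  · rw [Subgroup.closure_le]
    rintro x ⟨y, hy, rfl⟩
    rcases hy with hy | hy
    · have : y = Selt q := Subtype.ext hy
      rw [this]
      exact sbar_mem_DD q hq hq3
    · have : y = Telt q := Subtype.ext hy
      rw [this]
      have hsc : sbar q * cbar q = phi q (Telt q) := by
        have h3 : cbar q = sbar q * phi q (Telt q) := by
          rw [cbar, celt, map_mul]; rfl
        rw [h3, ← mul_assoc, sbar_sq, one_mul]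
      rw [← hsc]
      exact mul_mem (sbar_mem_DD q hq hq3) (cbar_mem_DD q hq hq3)
  · rw [DD, Subgroup.closure_le]
    rintro x (rfl | rfl)
    · exact Subgroup.subset_closure ⟨Selt q, Set.mem_insert _ _, rfl⟩
    · have h3 : cbar q = phi q (Selt q) * phi q (Telt q) := by
        rw [cbar, celt, map_mul]
      rw [h3]
      exact mul_mem (Subgroup.subset_closure ⟨Selt q, Set.mem_insert _ _, rfl⟩)
        (Subgroup.subset_closure ⟨Telt q, Set.mem_insert_of_mem _ rfl, rfl⟩)

end main
end Hecke19
namespace Hecke19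
variable (q : ℕ)
section main2
variable (hq : q.Prime) (hq3 : 3 ≤ q)
include hq hq3

lemma DD_finite : Finite (DD q) := by
  refine (Nat.card_pos_iff.mp ?_).2
  rw [card_DD q hq hq3]
  omega

lemma CC_finite : Finite (CC q) := by
  refine (Nat.card_pos_iff.mp ?_).2
  rw [card_CC q hq hq3]
  omega

lemma ebar_mem_DD : ebar q ∈ DD q := by
  rw [ebar_eq]
  exact mul_mem (cbar_mem_DD q hq hq3) (sbar_mem_DD q hq hq3)

set_option maxHeartbeats 1000000 in
lemma card_E : Nat.card ((BB q).subgroupOf (DD q)) = 2 := by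
  haveI := DD_finite q hq hq3
  have heD : (⟨ebar q, ebar_mem_DD q hq hq3⟩ : DD q) ∈ (BB q).subgroupOf (DD q) := by
    rw [Subgroup.mem_subgroupOf]
    exact ebar_BB q
  have hne : (⟨(⟨ebar q, ebar_mem_DD q hq hq3⟩ : DD q), heD⟩ :
      (BB q).subgroupOf (DD q)) ≠ 1 := by
    intro h
    rw [Subtype.ext_iff, Subtype.ext_iff] at h
    exact ebar_ne_one q hq hq3 h
  haveI : Nontrivial ((BB q).subgroupOf (DD q)) := ⟨⟨_, 1, hne⟩⟩
  have h2le : 2 ≤ Nat.card ((BB q).subgroupOf (DD q)) := Finite.one_lt_card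
  have hdvd : Nat.card ((BB q).subgroupOf (DD q)) ∣ 2 * q := by
    rw [← card_DD q hq hq3]
    exact Subgroup.card_subgroup_dvd_card _
  have hnq : ¬ (q ∣ Nat.card ((BB q).subgroupOf (DD q))) := by
    intro hd
    haveI : Fact q.Prime := ⟨hq⟩
    obtain ⟨g, hg⟩ := exists_prime_orderOf_dvd_card' q hd
    have hgD : orderOf ((g : DD q)) = q := by
      have h0 := orderOf_injective ((BB q).subgroupOf (DD q)).subtype
        Subtype.coe_injective g
      exact h0.trans hg
    haveI := CCsub_normal q hq hq3
    have hdq : orderOf ((QuotientGroup.mk' ((CC q).subgroupOf (DD q))) (g : DD q)) ∣ q := by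
      have h0 := orderOf_map_dvd (QuotientGroup.mk' ((CC q).subgroupOf (DD q))) (g : DD q)
      rw [hgD] at h0
      exact h0
    have hd2 : orderOf ((QuotientGroup.mk' ((CC q).subgroupOf (DD q))) (g : DD q)) ∣ 2 := by
      have h0 := orderOf_dvd_natCard
        ((QuotientGroup.mk' ((CC q).subgroupOf (DD q))) (g : DD q))
      rw [card_quot q hq hq3] at h0
      exact h0
    have hord1 : orderOf ((QuotientGroup.mk' ((CC q).subgroupOf (DD q))) (g : DD q)) = 1 := by
      rcases (Nat.Prime.eq_one_or_self_of_dvd hq _ hdq) with h | h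
      · exact h
      · exfalso
        rw [h] at hd2
        have := Nat.le_of_dvd (by norm_num) hd2
        omega
    have hπ1 : (QuotientGroup.mk' ((CC q).subgroupOf (DD q))) (g : DD q) = 1 :=
      orderOf_eq_one_iff.mp hord1
    rw [QuotientGroup.mk'_apply, QuotientGroup.eq_one_iff] at hπ1
    rw [Subgroup.mem_subgroupOf] at hπ1
    haveI := CC_finite q hq hq3
    have hordy : orderOf (⟨((g : DD q) : Matrix.SpecialLinearGroup (Fin 2) (QQ q)), hπ1⟩ :
        CC q) = q := by
      have e1 := orderOf_injective (CC q).subtype Subtype.coe_injective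
        (⟨((g : DD q) : Matrix.SpecialLinearGroup (Fin 2) (QQ q)), hπ1⟩ : CC q)
      have e2 := orderOf_injective (DD q).subtype Subtype.coe_injective (g : DD q)
      rw [← e1]
      have e3 : ((CC q).subtype (⟨((g : DD q) :
          Matrix.SpecialLinearGroup (Fin 2) (QQ q)), hπ1⟩ : CC q))
          = (DD q).subtype (g : DD q) := rfl
      rw [e3, e2, hgD]
    have htop : Subgroup.zpowers (⟨((g : DD q) : Matrix.SpecialLinearGroup (Fin 2) (QQ q)),
        hπ1⟩ : CC q) = ⊤ := by
      apply Subgroup.eq_top_of_card_eq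
      rw [Nat.card_zpowers, hordy, card_CC q hq hq3]
    have hcmem : (⟨cbar q, Subgroup.mem_zpowers _⟩ : CC q) ∈ Subgroup.zpowers
        (⟨((g : DD q) : Matrix.SpecialLinearGroup (Fin 2) (QQ q)), hπ1⟩ : CC q) := by
      rw [htop]; trivial
    rw [Subgroup.mem_zpowers_iff] at hcmem
    obtain ⟨n, hn⟩ := hcmem
    have hcoe : (((g : DD q) : Matrix.SpecialLinearGroup (Fin 2) (QQ q)))^n = cbar q := by
      rw [Subtype.ext_iff] at hn
      calc ((g : DD q) : Matrix.SpecialLinearGroup (Fin 2) (QQ q))^n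
          = (((⟨((g : DD q) : Matrix.SpecialLinearGroup (Fin 2) (QQ q)), hπ1⟩ : CC q)^n :
            CC q) : Matrix.SpecialLinearGroup (Fin 2) (QQ q)) := by
            rw [SubgroupClass.coe_zpow]
        _ = cbar q := hn
    have hgB : ((g : DD q) : Matrix.SpecialLinearGroup (Fin 2) (QQ q)) ∈ BB q := by
      have h5 := g.2
      rw [Subgroup.mem_subgroupOf] at h5
      exact h5
    exact cbar_not_BB q hq3 (hcoe ▸ Subgroup.zpow_mem (BB q) hgB n)
  -- now: card E divides 2q, is coprime to q, at least 2, hence = 2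
  have hcop : (Nat.card ((BB q).subgroupOf (DD q))).Coprime q :=
    Nat.Coprime.symm ((Nat.Prime.coprime_iff_not_dvd hq).mpr hnq)
  have h2 : Nat.card ((BB q).subgroupOf (DD q)) ∣ 2 := hcop.dvd_of_dvd_mul_right hdvd
  have := Nat.le_of_dvd (by norm_num) h2
  omega

end main2
end Hecke19

open Hecke19 in
/-- Proposition 5.4 and (5.8): for prime `q ≥ 3`, the principal congruence subgroup of
level 2 (matrices `≡ ±I mod 2 ℤ[λ_q]`) has index `2q` in `G_q`, and `G₀(2)` (matrices
whose upper-right entry is `≡ 0 mod 2 ℤ[λ_q]`) has index `q`. -/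
theorem stmt_19 (q : ℕ) (hq : q.Prime) (hq3 : 3 ≤ q) :
    (∀ H : Subgroup (HeckeSL q),
      (∀ x : HeckeSL q, x ∈ H ↔ ∀ i j,
        (((x : Matrix.SpecialLinearGroup (Fin 2) ℝ) : Matrix (Fin 2) (Fin 2) ℝ) i j
          - (1 : Matrix (Fin 2) (Fin 2) ℝ) i j) ∈ twoLambda q) →
      H.index = 2 * q) ∧
    (∀ K : Subgroup (HeckeSL q),
      (∀ x : HeckeSL q, x ∈ K ↔
        ((x : Matrix.SpecialLinearGroup (Fin 2) ℝ) : Matrix (Fin 2) (Fin 2) ℝ) 0 1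
          ∈ twoLambda q) →
      K.index = q) := by
  constructor
  · intro H hH
    have hker : H = (phi q).ker := by
      ext x
      rw [hH x, MonoidHom.mem_ker, show (1 : Matrix.SpecialLinearGroup (Fin 2) (QQ q))
        = phi q 1 from (map_one _).symm, phi_eq_phi_iff]
      constructor
      · intro h i j
        obtain ⟨z, hz, hzz⟩ := h i j
        exact ⟨z, hz, hzz⟩
      · intro h i j
        obtain ⟨z, hz, hzz⟩ := h i j
        exact ⟨z, hz, hzz⟩
    rw [hker, Subgroup.index_ker]
    rw [show (phi q).range = DD q from range_phi q hq hq3]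
    exact card_DD q hq hq3
  · intro K hK
    have hcomap : K = (BB q).comap (phi q) := by
      ext x
      rw [hK x, Subgroup.mem_comap]
      have hBB : phi q x ∈ BB q ↔
          ((phi q x : Matrix.SpecialLinearGroup (Fin 2) (QQ q)) :
            Matrix (Fin 2) (Fin 2) (QQ q)) 0 1 = 0 := Iff.rfl
      rw [hBB, phi_coe, Matrix.of_apply,
        show (0 : QQ q) = mk2 q 0 (zero_mem _) from (mk2_zero q).symm, mk2_eq_iff]
      constructor
      · rintro ⟨z, hz, hzz⟩
        exact ⟨z, hz, by rw [sub_zero]; exact hzz⟩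
      · rintro ⟨z, hz, hzz⟩
        rw [sub_zero] at hzz
        exact ⟨z, hz, hzz⟩
    rw [hcomap, Subgroup.index_comap,
      show (phi q).range = DD q from range_phi q hq hq3]
    have h1 := Subgroup.card_mul_index ((BB q).subgroupOf (DD q))
    rw [card_E q hq hq3, card_DD q hq hq3] at h1
    have h2 : (BB q).relIndex (DD q) = ((BB q).subgroupOf (DD q)).index := rfl
    rw [h2]
    omega
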